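/- For every compact subinterval [a,b] ⊂ (0, √3/2) there exists ε > 0 such that for every r ∈ [a,b] one has ε ≤ (1−2δ_r)/π, r + ε < √3/2, and for all s with r < s ≤ r + ε the inequality (1/2)·arcsin(π·(s−r)/(1−2δ_r)) < (π/2)·∫_r^s dτ/(1−2δ_τ) holds. -/

import Mathlib

open MeasureTheory

/-- `δ_τ = τ · tan((1/2)·arctan(2τ))`. -/
noncomputable def delta (t : ℝ) : ℝ := t * Real.tan ((1/2) * Real.arctan (2*t))

lemma delta_eq (t : ℝ) : delta t = (Real.sqrt (1 + 4*t^2) - 1) / 2 := by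
  have h44 : (1:ℝ) + 4*t^2 = 1 + (2*t)^2 := by ring
  rw [h44]
  set θ := Real.arctan (2*t) with hθ
  have hθ1 : -(Real.pi/2) < θ := Real.neg_pi_div_two_lt_arctan _
  have hθ2 : θ < Real.pi/2 := Real.arctan_lt_pi_div_two _
  have hc : 0 < Real.cos ((1/2)*θ) := Real.cos_pos_of_mem_Ioo ⟨by linarith, by linarith⟩
  have hupos : 0 < Real.sqrt (1+(2*t)^2) := Real.sqrt_pos.2 (by positivity)
  have hu2 : Real.sqrt (1+(2*t)^2)^2 = 1+(2*t)^2 := Real.sq_sqrt (by positivity)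
  have hs2 : Real.sin θ = 2 * Real.sin ((1/2)*θ) * Real.cos ((1/2)*θ) := by
    rw [← Real.sin_two_mul]; ring_nf
  have hc2 : Real.cos θ = 2 * Real.cos ((1/2)*θ)^2 - 1 := by
    rw [← Real.cos_two_mul]; ring_nf
  have hsin : Real.sin θ = 2*t / Real.sqrt (1+(2*t)^2) := Real.sin_arctan _
  have hcos : Real.cos θ = 1 / Real.sqrt (1+(2*t)^2) := Real.cos_arctan _
  set u := Real.sqrt (1+(2*t)^2)
  set s := Real.sin ((1/2)*θ); set c := Real.cos ((1/2)*θ)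
  have e1 : 2*s*c*u = 2*t := by
    rw [hs2] at hsin; field_simp at hsin; linarith [hsin]
  have e2 : (2*c^2-1)*u = 1 := by
    rw [hc2] at hcos; field_simp at hcos; linarith [hcos]
  unfold delta
  rw [Real.tan_eq_sin_div_cos, ← hθ]
  show t * (s / c) = (u - 1)/2
  have key0 : (t*s*2 - (u-1)*c) * (2*c*u) = 0 := by
    linear_combination (2*t)*e1 - (u-1)*e2 - hu2
  have hne : (2*c*u) ≠ 0 := by positivity
  have key : t*s*2 - (u-1)*c = 0 := by
    rcases mul_eq_zero.mp key0 with h | h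
    · exact h
    · exact absurd h hne
  rw [mul_div_assoc', div_eq_div_iff hc.ne' (by norm_num : (2:ℝ) ≠ 0)]
  linarith

lemma one_sub_two_delta (t : ℝ) : 1 - 2 * delta t = 2 - Real.sqrt (1 + 4*t^2) := by
  rw [delta_eq]; ring

lemma one_le_sqrt' (t : ℝ) : 1 ≤ Real.sqrt (1 + 4*t^2) := by
  have h : Real.sqrt 1 ≤ Real.sqrt (1 + 4*t^2) := Real.sqrt_le_sqrt (by nlinarith)
  simpa using h

lemma sqrt_lt_two' {t : ℝ} (h0 : 0 ≤ t) (h : t < Real.sqrt 3 / 2) :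
    Real.sqrt (1 + 4*t^2) < 2 := by
  have h3 : Real.sqrt 3 ^ 2 = 3 := Real.sq_sqrt (by norm_num)
  have h4 : (1:ℝ) + 4*t^2 < 4 := by nlinarith [Real.sqrt_nonneg 3]
  have h5 : Real.sqrt (1 + 4*t^2) < Real.sqrt 4 := Real.sqrt_lt_sqrt (by positivity) h4
  have h6 : Real.sqrt 4 = 2 := by
    rw [show (4:ℝ) = 2^2 by norm_num]
    exact Real.sqrt_sq (by norm_num)
  linarith

set_option maxHeartbeats 1000000 in
theorem arcsin_bound_beats_integral_bound_uniformly (a b : ℝ) (ha : 0 < a) (hab : a ≤ b)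
    (hb : b < Real.sqrt 3 / 2) :
    ∃ ε > 0, ∀ r ∈ Set.Icc a b,
      ε ≤ (1 - 2 * delta r) / Real.pi ∧ r + ε < Real.sqrt 3 / 2 ∧
        ∀ s, r < s → s ≤ r + ε →
          (1/2) * Real.arcsin (Real.pi * (s - r) / (1 - 2 * delta r)) <
            (Real.pi/2) * (∫ τ in r..s, 1/(1 - 2 * delta τ)) := by
  have hpi : (0:ℝ) < Real.pi := Real.pi_pos
  have hpi3 : (3:ℝ) < Real.pi := Real.pi_gt_three
  set b' : ℝ := (b + Real.sqrt 3/2)/2 with hb'def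
  have hbb' : b < b' := by rw [hb'def]; linarith
  have hb'lt : b' < Real.sqrt 3/2 := by rw [hb'def]; linarith
  have hb'pos : 0 < b' := by linarith
  set L : ℝ := 2 - Real.sqrt (1+4*b'^2) with hLdef
  have hL : 0 < L := sub_pos.2 (sqrt_lt_two' hb'pos.le hb'lt)
  have hL1 : L ≤ 1 := by have := one_le_sqrt' b'; rw [hLdef]; linarith
  have hden : ∀ t : ℝ, 0 ≤ t → t ≤ b' → L ≤ 2 - Real.sqrt (1+4*t^2) := by
    intro t h0 h1
    have : Real.sqrt (1+4*t^2) ≤ Real.sqrt (1+4*b'^2) := Real.sqrt_le_sqrt (by nlinarith)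
    rw [hLdef]; linarith
  have hden1 : ∀ t : ℝ, 2 - Real.sqrt (1+4*t^2) ≤ 1 := fun t => by
    have := one_le_sqrt' t; linarith
  refine ⟨min ((Real.sqrt 3/2 - b)/2) (min (L/Real.pi) (4*a*L^3/Real.pi^2)),
    lt_min (by linarith) (lt_min (by positivity) (by positivity)), ?_⟩
  set ε : ℝ := min ((Real.sqrt 3/2 - b)/2) (min (L/Real.pi) (4*a*L^3/Real.pi^2)) with hεdef
  intro r hr
  obtain ⟨har, hrb⟩ := hr
  have hr0 : 0 < r := lt_of_lt_of_le ha har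
  have hε1 : ε ≤ (Real.sqrt 3/2 - b)/2 := min_le_left _ _
  have hε2 : ε ≤ L/Real.pi := le_trans (min_le_right _ _) (min_le_left _ _)
  have hε3 : ε ≤ 4*a*L^3/Real.pi^2 := le_trans (min_le_right _ _) (min_le_right _ _)
  have hrb' : r ≤ b' := le_trans hrb hbb'.le
  have hrε : r + ε ≤ b' := by rw [hb'def]; linarith
  have hdr : L ≤ 2 - Real.sqrt (1+4*r^2) := hden r hr0.le hrb'
  have hdrpos : 0 < 2 - Real.sqrt (1+4*r^2) := lt_of_lt_of_le hL hdr
  have hdr1 : 2 - Real.sqrt (1+4*r^2) ≤ 1 := hden1 r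
  refine ⟨?_, by linarith, ?_⟩
  · rw [one_sub_two_delta]
    refine hε2.trans ?_
    gcongr
  · intro s hrs hsε
    have hsb' : s ≤ b' := le_trans hsε hrε
    simp only [one_sub_two_delta]
    set f : ℝ → ℝ := fun τ => 1/(2 - Real.sqrt (1+4*τ^2)) with hf
    have hfc : ContinuousOn f (Set.Icc r s) := by
      apply ContinuousOn.div continuousOn_const
      · fun_prop
      · intro τ hτ
        exact (lt_of_lt_of_le hL
          (hden τ (le_trans hr0.le hτ.1) (le_trans hτ.2 hsb'))).ne'
    have hint : IntervalIntegrable f volume r s := by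
      apply ContinuousOn.intervalIntegrable
      rwa [Set.uIcc_of_le hrs.le]
    have hub : ∀ τ ∈ Set.Icc r s, f τ ≤ 1/L := by
      intro τ hτ
      exact one_div_le_one_div_of_le hL (hden τ (le_trans hr0.le hτ.1) (le_trans hτ.2 hsb'))
    have hlb : ∀ τ ∈ Set.Icc r s, 1/(2 - Real.sqrt (1+4*r^2)) + 2*a*(τ - r) ≤ f τ := by
      intro τ hτ
      obtain ⟨h1, h2⟩ := hτ
      have hτ0 : (0:ℝ) ≤ τ := le_trans hr0.le h1
      have hτb' : τ ≤ b' := le_trans h2 hsb'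
      have hdτ : L ≤ 2 - Real.sqrt (1+4*τ^2) := hden τ hτ0 hτb'
      have hdτpos : 0 < 2 - Real.sqrt (1+4*τ^2) := lt_of_lt_of_le hL hdτ
      have hdτ1 : 2 - Real.sqrt (1+4*τ^2) ≤ 1 := hden1 τ
      have hPQ : Real.sqrt (1+4*r^2) ≤ Real.sqrt (1+4*τ^2) :=
        Real.sqrt_le_sqrt (by nlinarith)
      have hP2 : Real.sqrt (1+4*τ^2)^2 = 1+4*τ^2 := Real.sq_sqrt (by positivity)
      have hQ2 : Real.sqrt (1+4*r^2)^2 = 1+4*r^2 := Real.sq_sqrt (by positivity)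
      have hPle : Real.sqrt (1+4*τ^2) < 2 := sqrt_lt_two' hτ0 (lt_of_le_of_lt hτb' hb'lt)
      have hQle : Real.sqrt (1+4*r^2) < 2 := sqrt_lt_two' hr0.le (by linarith)
      have hgap : 2*a*(τ - r) ≤ Real.sqrt (1+4*τ^2) - Real.sqrt (1+4*r^2) := by
        nlinarith [mul_nonneg (sub_nonneg.2 hPQ)
            (by linarith : (0:ℝ) ≤ 4 - (Real.sqrt (1+4*τ^2) + Real.sqrt (1+4*r^2))),
          mul_nonneg (sub_nonneg.2 h1) (by linarith : (0:ℝ) ≤ τ + r - 2*a)]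
      have he : 0 ≤ 2*a*(τ - r) := mul_nonneg (by linarith) (by linarith)
      show 1/(2 - Real.sqrt (1+4*r^2)) + 2*a*(τ - r) ≤ 1/(2 - Real.sqrt (1+4*τ^2))
      rw [div_add' _ _ _ hdrpos.ne', div_le_div_iff₀ hdrpos hdτpos]
      nlinarith [mul_nonneg he (sub_nonneg.2
        (mul_le_one₀ hdr1 hdτpos.le hdτ1 : (2 - Real.sqrt (1+4*r^2)) * (2 - Real.sqrt (1+4*τ^2)) ≤ 1))]
    have hIub : (∫ τ in r..s, f τ) ≤ (s - r)*(1/L) := by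
      have := intervalIntegral.integral_mono_on hrs.le hint intervalIntegrable_const hub
      rwa [intervalIntegral.integral_const, smul_eq_mul] at this
    have hIlb : (s - r)/(2 - Real.sqrt (1+4*r^2)) + a*(s-r)^2 ≤ ∫ τ in r..s, f τ := by
      have h1 : (∫ τ in r..s, (1/(2 - Real.sqrt (1+4*r^2)) + 2*a*(τ - r))) ≤ ∫ τ in r..s, f τ :=
        intervalIntegral.integral_mono_on hrs.le
          (by apply Continuous.intervalIntegrable; fun_prop) hint hlb
      have h2 : (∫ τ in r..s, (1/(2 - Real.sqrt (1+4*r^2)) + 2*a*(τ - r)))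
          = (s-r)/(2 - Real.sqrt (1+4*r^2)) + a*(s-r)^2 := by
        rw [intervalIntegral.integral_add intervalIntegrable_const
          (by apply Continuous.intervalIntegrable; fun_prop)]
        have h3 : (∫ τ in r..s, 2*a*(τ - r)) = 2*a*((s^2-r^2)/2 - (s-r)*r) := by
          rw [intervalIntegral.integral_const_mul,
            intervalIntegral.integral_sub
              (by apply Continuous.intervalIntegrable; fun_prop) intervalIntegrable_const,
            integral_id, intervalIntegral.integral_const, smul_eq_mul]
        rw [h3, intervalIntegral.integral_const, smul_eq_mul]
        field_simp
        ring
      linarith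
    set I : ℝ := ∫ τ in r..s, f τ with hI
    have hsr : 0 < s - r := sub_pos.2 hrs
    have hsrε : s - r ≤ ε := by linarith
    set x : ℝ := Real.pi * (s - r) / (2 - Real.sqrt (1+4*r^2)) with hx
    set y : ℝ := Real.pi * I with hy
    have hxpos : 0 < x := by rw [hx]; positivity
    have hxy : x + Real.pi*a*(s-r)^2 ≤ y := by
      have h4 : Real.pi * ((s-r)/(2 - Real.sqrt (1+4*r^2)) + a*(s-r)^2) ≤ Real.pi * I :=
        mul_le_mul_of_nonneg_left hIlb hpi.le
      rw [hx, hy]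
      calc Real.pi * (s - r) / (2 - Real.sqrt (1+4*r^2)) + Real.pi*a*(s-r)^2
          = Real.pi * ((s-r)/(2 - Real.sqrt (1+4*r^2)) + a*(s-r)^2) := by ring
        _ ≤ Real.pi * I := h4
    have hyub : y ≤ Real.pi * (s-r) / L := by
      rw [hy]
      calc Real.pi * I ≤ Real.pi * ((s-r)*(1/L)) := mul_le_mul_of_nonneg_left hIub hpi.le
        _ = Real.pi * (s-r) / L := by ring
    have hεL : s - r ≤ L/Real.pi := le_trans hsrε hε2
    have hπsr : Real.pi * (s - r) ≤ L := by
      have h5 := mul_le_mul_of_nonneg_left hεL hpi.le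
      have h6 : Real.pi * (L/Real.pi) = L := by field_simp
      linarith
    have hy1 : y ≤ 1 := by
      have h5 : Real.pi * (s-r) / L ≤ 1 := by
        rw [div_le_one hL]; linarith
      linarith
    have hx1 : x ≤ 1 := by
      rw [hx, div_le_one hdrpos]; linarith
    have hypos : 0 < y := lt_of_lt_of_le (by positivity) hxy
    have hcube : y^3 ≤ 4*(Real.pi*a*(s-r)^2) := by
      have h6 : y^3 ≤ (Real.pi*(s-r)/L)^3 := pow_le_pow_left₀ hypos.le hyub 3
      have h8 : (s - r) * Real.pi^2 ≤ 4*a*L^3 :=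
        (le_div_iff₀ (by positivity)).mp (le_trans hsrε hε3)
      have h9 : (Real.pi*(s-r)/L)^3 ≤ 4*(Real.pi*a*(s-r)^2) := by
        rw [div_pow, div_le_iff₀ (by positivity)]
        nlinarith [mul_le_mul_of_nonneg_right h8
          (by positivity : (0:ℝ) ≤ Real.pi*(s-r)^2)]
      linarith
    have hsin := Real.sin_gt_sub_cube hypos
    have hxsin : x < Real.sin y := by linarith [pow_pos hypos 3]
    have hy2 : y ≤ Real.pi/2 := by linarith
    have harc : Real.arcsin x < y := by
      have h10 : Real.arcsin x < Real.arcsin (Real.sin y) :=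
        Real.strictMonoOn_arcsin ⟨by linarith, hx1⟩
          ⟨Real.neg_one_le_sin y, Real.sin_le_one y⟩ hxsin
      rwa [Real.arcsin_sin (by linarith) hy2] at h10
    rw [hy] at harc
    linarith
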